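/- Let g be a continuously differentiable, strictly positive, even pdf on ℝ with g(x) → 0 as |x| → ∞, let G be its cdf, and let k > 0. Then the function h(x) = g(x) e^{k G(|x|)} attains its global maximum on ℝ, no global maximizer of h equals 0, and the set of global maximizers is symmetric about 0 (if m is a maximizer then so is −m); in particular h has at least two global maximum points. -/

import Mathlib

open MeasureTheory Real Set

theorem stmt_4 (g : ℝ → ℝ) (k : ℝ) (hk : 0 < k)
    (hg_smooth : ContDiff ℝ 1 g) (hg_pos : ∀ x, 0 < g x)
    (hg_int : (∫ x, g x) = 1)
    (hg_even : ∀ x, g (-x) = g x)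
    (hg_top : Filter.Tendsto g Filter.atTop (nhds 0))
    (hg_bot : Filter.Tendsto g Filter.atBot (nhds 0)) :
    let G : ℝ → ℝ := fun x => ∫ t in Set.Iic x, g t
    let h : ℝ → ℝ := fun x => g x * Real.exp (k * G |x|)
    (∃ m, ∀ x, h x ≤ h m) ∧
      (∀ m, (∀ x, h x ≤ h m) → m ≠ 0) ∧
      (∀ m, (∀ x, h x ≤ h m) → ∀ x, h x ≤ h (-m)) ∧
      ∃ m₁ m₂, m₁ ≠ m₂ ∧ (∀ x, h x ≤ h m₁) ∧ (∀ x, h x ≤ h m₂) := by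
  intro G h
  have hgc : Continuous g := hg_smooth.continuous
  have hInt : Integrable g := by
    by_contra hni
    rw [integral_undef hni] at hg_int
    norm_num at hg_int
  -- G properties
  have hGeq : ∀ y : ℝ, G y = G 0 + ∫ t in (0:ℝ)..y, g t := by
    intro y
    have := intervalIntegral.integral_Iic_sub_Iic hInt.integrableOn hInt.integrableOn
      (a := 0) (b := y)
    simp only [G]
    linarith [this]
  have hGd : ∀ x : ℝ, HasDerivAt G (g x) x := by
    intro x
    have h1 : HasDerivAt (fun y => ∫ t in (0:ℝ)..y, g t) (g x) x :=
      intervalIntegral.integral_hasDerivAt_right hInt.intervalIntegrable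
        (hgc.stronglyMeasurableAtFilter _ _) hgc.continuousAt
    have h2 := h1.const_add (G 0)
    have : (fun y => G 0 + ∫ t in (0:ℝ)..y, g t) = G := by
      funext y; exact (hGeq y).symm
    rwa [this] at h2
  have hGcont : Continuous G := by
    refine continuous_iff_continuousAt.2 fun x => (hGd x).continuousAt
  have hG0 : ∀ x, 0 ≤ G x := fun x =>
    setIntegral_nonneg measurableSet_Iic (fun t _ => (hg_pos t).le)
  have hG1 : ∀ x, G x ≤ 1 := by
    intro x
    rw [← hg_int]
    exact setIntegral_le_integral hInt (Filter.Eventually.of_forall fun t => (hg_pos t).le)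
  -- h properties
  have hh_pos : ∀ x, 0 < h x := fun x => mul_pos (hg_pos x) (Real.exp_pos _)
  have hh_even : ∀ x, h (-x) = h x := by
    intro x; simp only [h, abs_neg, hg_even]
  have hcont : Continuous h :=
    hgc.mul (Real.continuous_exp.comp ((continuous_const.mul (hGcont.comp continuous_abs))))
  -- bound and tendsto 0 at cocompact
  have hbound : ∀ x, h x ≤ g x * Real.exp k := by
    intro x
    refine mul_le_mul_of_nonneg_left ?_ (hg_pos x).le
    exact Real.exp_le_exp.2 (by nlinarith [hG1 |x|, hG0 |x|])
  have htend : Filter.Tendsto h (Filter.cocompact ℝ) (nhds 0) := by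
    have hmul : Filter.Tendsto (fun x => g x * Real.exp k) (Filter.cocompact ℝ) (nhds 0) := by
      have : Filter.Tendsto g (Filter.cocompact ℝ) (nhds 0) := by
        rw [cocompact_eq_atBot_atTop]
        exact Filter.Tendsto.sup hg_bot hg_top
      simpa using this.mul_const (Real.exp k)
    refine squeeze_zero (fun x => (hh_pos x).le) hbound hmul
  -- existence of global max
  have hmax : ∃ m, ∀ x, h x ≤ h m := by
    refine hcont.exists_forall_ge' 0 ?_
    have : ∀ᶠ x in Filter.cocompact ℝ, h x < h 0 :=
      htend.eventually (Filter.Tendsto.eventually_lt_const (hh_pos 0) Filter.tendsto_id)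
    exact this.mono fun x hx => hx.le
  -- h 0 is not a max : ∃ x, h 0 < h x
  have hne0 : ∃ x, h 0 < h x := by
    -- derivative of ψ = g * exp(k G ·) at 0 is k (g 0)^2 exp (k G 0) > 0
    set ψ : ℝ → ℝ := fun x => g x * Real.exp (k * G x) with hψ
    have hgd : HasDerivAt g (deriv g 0) 0 :=
      ((hg_smooth.differentiable one_ne_zero) 0).hasDerivAt
    have hg'0 : deriv g 0 = 0 := by
      have hgd' : HasDerivAt g (deriv g 0) (-0 : ℝ) := by simpa using hgd
      have hneg : HasDerivAt (fun x => g (-x)) (-(deriv g 0)) 0 := by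
        simpa [mul_comm, Function.comp_def] using (hgd'.comp 0 (hasDerivAt_neg (0:ℝ)))
      have : (fun x : ℝ => g (-x)) = g := funext hg_even
      rw [this] at hneg
      have := hgd.unique hneg
      linarith
    have hψd : HasDerivAt ψ (k * (g 0) ^ 2 * Real.exp (k * G 0)) 0 := by
      have hexp : HasDerivAt (fun x => Real.exp (k * G x)) (Real.exp (k * G 0) * (k * g 0)) 0 :=
        (((hGd 0).const_mul k).exp)
      have := hgd.mul hexp
      rw [hg'0] at this
      simpa [hψ, Pi.mul_def] using this.congr_deriv (by ring)
    have hd_pos : 0 < k * (g 0) ^ 2 * Real.exp (k * G 0) :=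
      mul_pos (mul_pos hk (pow_pos (hg_pos 0) 2)) (Real.exp_pos _)
    have hslope := hψd.hasDerivWithinAt (s := Ioi (0:ℝ))
    rw [hasDerivWithinAt_iff_tendsto_slope] at hslope
    have hev : ∀ᶠ x in nhdsWithin 0 (Ioi (0:ℝ) \ {0}), 0 < slope ψ 0 x :=
      hslope.eventually (Filter.Tendsto.eventually_const_lt hd_pos Filter.tendsto_id)
    have hne : (nhdsWithin (0:ℝ) (Ioi (0:ℝ) \ {0})).NeBot := by
      have : Ioi (0:ℝ) \ {0} = Ioi 0 := by
        ext x; simp (config := {contextual := true}) [ne_of_gt]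
      rw [this]; infer_instance
    obtain ⟨x, hx, hxmem⟩ := (hev.and (eventually_mem_nhdsWithin)).exists
    have hx0 : 0 < x := hxmem.1
    have hxs : 0 < (ψ x - ψ 0) / (x - 0) := by
      rwa [slope_def_field] at hx
    have hψlt : ψ 0 < ψ x := by
      rw [sub_zero] at hxs
      have := mul_pos hxs hx0
      rw [div_mul_cancel₀ _ (ne_of_gt hx0)] at this
      linarith
    refine ⟨x, ?_⟩
    have hhx : h x = ψ x := by simp only [h, hψ, abs_of_pos hx0]
    have hh0 : h 0 = ψ 0 := by simp only [h, hψ, abs_zero]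
    rw [hhx, hh0]; exact hψlt
  obtain ⟨m, hm⟩ := hmax
  have hmne : ∀ m, (∀ x, h x ≤ h m) → m ≠ 0 := by
    intro m' hm' hm0
    obtain ⟨x, hx⟩ := hne0
    rw [hm0] at hm'
    exact absurd (hm' x) (not_le.2 hx)
  have hsym : ∀ m, (∀ x, h x ≤ h m) → ∀ x, h x ≤ h (-m) := by
    intro m' hm' x
    rw [hh_even m']; exact hm' x
  refine ⟨⟨m, hm⟩, hmne, hsym, m, -m, ?_, hm, hsym m hm⟩
  intro hmm
  exact hmne m hm (by linarith [hmm])
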